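/- Let X be a complex nonzero Banach space, let T be a bounded linear operator on X, and let b : ℕ → ℝ be a sequence of strictly positive real numbers such that H(b) < +∞, b(n) → +∞, and ‖T^n‖/b(n) → 0 as n → +∞. Let s : ℕ → ℝ be any nondecreasing sequence of strictly positive real numbers such that s(n) → +∞, s(n+1)/s(n) → 1, Δ^q s ∈ ℓ¹ for some q ∈ ℕ with q ≥ 2, and the sequence (b(n)/s(n))_{n∈ℕ} is bounded. Then ‖T^n‖/s(n) → 0 as n → +∞, and the following are equivalent: (i) the sequence of operators (1/s(n))·∑_{k=0}^{n} (Δs)(n−k)·T^k converges in the operator norm topology; (ii) the range of I − T is closed in X and X is the direct sum of the kernel of I − T and the range of I − T. Moreover, if these equivalent conditions hold and P is the operator-norm limit of the sequence in (i), then P is the projection of X onto the kernel of I − T along the range of I − T (i.e., P² = P, the range of P is the kernel of I − T, and the kernel of P is the range of I − T). -/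

import Mathlib

/-- The difference operator on real sequences: `(Δa)(0) = a(0)` and
`(Δa)(n) = a(n) − a(n−1)` for `n ≥ 1`. -/
def dSeq (a : ℕ → ℝ) : ℕ → ℝ := fun n =>
  match n with
  | 0 => a 0
  | n + 1 => a (n + 1) - a n

/-- The index `H(a) ∈ ℕ ∪ {+∞}`: the infimum of the set of `m ∈ ℕ` for which the
sequence `(a(n)/n^m)_{n≥1}` is bounded from above. -/
noncomputable def Hindex (a : ℕ → ℝ) : ℕ∞ :=
  sInf {m : ℕ∞ | ∃ k : ℕ, m = (k : ℕ∞) ∧ ∃ M : ℝ, ∀ n : ℕ, 1 ≤ n → a n / (n : ℝ) ^ k ≤ M}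

open Filter Finset

namespace Stmt18Aux

/-! ### Backward differences of `ℤ`-indexed sequences -/

def Dz (b : ℤ → ℝ) : ℤ → ℝ := fun i => b i - b (i - 1)

noncomputable def zext (a : ℕ → ℝ) : ℤ → ℝ := fun i => if 0 ≤ i then a i.toNat else 0

lemma Dz_congr (r : ℕ) : ∀ (b c : ℤ → ℝ) (i : ℤ),
    (∀ i' : ℤ, i - r ≤ i' → i' ≤ i → b i' = c i') → Dz^[r] b i = Dz^[r] c i := by
  induction r with
  | zero => intro b c i h; simpa using h i (by simp) le_rfl
  | succ r ih =>
    intro b c i h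
    rw [Function.iterate_succ_apply, Function.iterate_succ_apply]
    refine ih _ _ _ ?_
    intro i' h1 h2
    have e1 : b i' = c i' := h i' (by push_cast at h1 ⊢; omega) (by omega)
    have e2 : b (i' - 1) = c (i' - 1) := h _ (by push_cast at h1 ⊢; omega) (by omega)
    simp [Dz, e1, e2]

lemma abs_Dz_le (r : ℕ) : ∀ (b : ℤ → ℝ) (i : ℤ) (C : ℝ),
    (∀ i' : ℤ, i - r ≤ i' → i' ≤ i → |b i'| ≤ C) → |Dz^[r] b i| ≤ 2 ^ r * C := by
  induction r with
  | zero => intro b i C h; simpa using h i (by simp) le_rfl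
  | succ r ih =>
    intro b i C h
    rw [Function.iterate_succ_apply]
    calc |Dz^[r] (Dz b) i| ≤ 2 ^ r * (2 * C) := by
          refine ih _ _ _ ?_
          intro i' h1 h2
          have e1 := h i' (by push_cast at h1 ⊢; omega) (by omega)
          have e2 := h (i' - 1) (by push_cast at h1 ⊢; omega) (by omega)
          have h3 : |b i' - b (i' - 1)| ≤ |b i'| + |b (i' - 1)| := abs_sub _ _
          calc |Dz b i'| ≤ |b i'| + |b (i' - 1)| := h3
          _ ≤ C + C := add_le_add e1 e2
          _ = 2 * C := by ring
    _ = 2 ^ (r + 1) * C := by ring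

lemma Dz_eq_zero (r : ℕ) (b : ℤ → ℝ) (i : ℤ)
    (h : ∀ i' : ℤ, i - r ≤ i' → i' ≤ i → b i' = 0) : Dz^[r] b i = 0 := by
  have h2 := abs_Dz_le r b i 0 (fun i' h1 h2 => by simp [h i' h1 h2])
  rw [mul_zero] at h2
  exact abs_nonpos_iff.mp h2

lemma zext_dSeq (a : ℕ → ℝ) : zext (dSeq a) = Dz (zext a) := by
  funext i
  rcases lt_trichotomy i 0 with h | h | h
  · have h1 : ¬ (0:ℤ) ≤ i := by omega
    have h2 : ¬ (0:ℤ) ≤ i - 1 := by omega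
    simp [zext, Dz, h1, h2]
    intro h3
    omega
  · subst h
    have h2 : ¬ (0:ℤ) ≤ (0:ℤ) - 1 := by omega
    simp [zext, Dz, h2, dSeq]
  · obtain ⟨m, rfl⟩ : ∃ m : ℕ, i = (m : ℤ) + 1 := ⟨(i - 1).toNat, by omega⟩
    have h1 : (0:ℤ) ≤ (m:ℤ) + 1 := by omega
    have h2 : (0:ℤ) ≤ (m:ℤ) + 1 - 1 := by omega
    have h3 : ((m:ℤ) + 1).toNat = m + 1 := by omega
    have h4 : ((m:ℤ) + 1 - 1).toNat = m := by omega
    simp only [zext, Dz, if_pos h1, if_pos h2, h3, h4]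
    rfl

lemma zext_iter (r : ℕ) : ∀ a : ℕ → ℝ, zext (dSeq^[r] a) = Dz^[r] (zext a) := by
  induction r with
  | zero => intro a; rfl
  | succ r ih =>
    intro a
    rw [Function.iterate_succ_apply, Function.iterate_succ_apply, ← zext_dSeq, ih]

lemma Dz_shift (r : ℕ) : ∀ (b : ℤ → ℝ) (t i : ℤ),
    Dz^[r] (fun j => b (j + t)) i = Dz^[r] b (i + t) := by
  induction r with
  | zero => intro b t i; simp
  | succ r ih =>
    intro b t i
    rw [Function.iterate_succ_apply, Function.iterate_succ_apply]
    have hfun : (Dz fun j => b (j + t)) = fun j => Dz b (j + t) := by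
      funext j
      have h : j - 1 + t = j + t - 1 := by ring
      simp only [Dz, h]
    rw [hfun, ih]

/-! ### Operator-valued polynomial sums -/

variable {X : Type*} [NormedAddCommGroup X] [NormedSpace ℂ X]

noncomputable def Pop (T : X →L[ℂ] X) (b : ℤ → ℝ) (N : ℕ) : X →L[ℂ] X :=
  ∑ j ∈ Finset.range (N + 1), ((b (-(j:ℤ)) : ℝ) : ℂ) • T ^ j

lemma Pop_congr (T : X →L[ℂ] X) {b c : ℤ → ℝ} (N : ℕ)
    (h : ∀ i : ℤ, i ≤ 0 → b i = c i) : Pop T b N = Pop T c N :=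
  Finset.sum_congr rfl fun j _ => by rw [h (-(j:ℤ)) (by omega)]

lemma Pop_mul_one_sub (T : X →L[ℂ] X) (b : ℤ → ℝ) (N : ℕ)
    (hpos : ∀ i : ℤ, 0 < i → b i = 0) (hbot : b (-(N:ℤ) - 1) = 0) :
    Pop T b N * (1 - T) = Pop T (fun i => b i - b (i + 1)) (N + 1) := by
  have hmulT : Pop T b N * T
      = ∑ j ∈ Finset.range (N + 1), ((b (-(j:ℤ)) : ℝ) : ℂ) • T ^ (j + 1) := by
    rw [Pop, Finset.sum_mul]
    exact Finset.sum_congr rfl fun j _ => by rw [smul_mul_assoc, ← pow_succ]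
  have hrhs : Pop T (fun i => b i - b (i + 1)) (N + 1)
      = (∑ j ∈ Finset.range (N + 2), ((b (-(j:ℤ)) : ℝ) : ℂ) • T ^ j)
        - ∑ j ∈ Finset.range (N + 2), ((b (-(j:ℤ) + 1) : ℝ) : ℂ) • T ^ j := by
    rw [Pop, ← Finset.sum_sub_distrib]
    exact Finset.sum_congr rfl fun j _ => by push_cast; rw [← sub_smul]
  have h1 : (∑ j ∈ Finset.range (N + 2), ((b (-(j:ℤ)) : ℝ) : ℂ) • T ^ j) = Pop T b N := by
    rw [Finset.sum_range_succ]
    have h : b (-((N+1 : ℕ):ℤ)) = 0 := by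
      have e : -((N+1 : ℕ):ℤ) = -(N:ℤ) - 1 := by push_cast; ring
      rw [e, hbot]
    rw [h, Pop]
    simp
  have h2 : (∑ j ∈ Finset.range (N + 2), ((b (-(j:ℤ) + 1) : ℝ) : ℂ) • T ^ j)
      = Pop T b N * T := by
    rw [Finset.sum_range_succ', hmulT]
    have hb1 : b (-((0:ℕ):ℤ) + 1) = 0 := hpos _ (by norm_num)
    rw [hb1]
    simp only [Complex.ofReal_zero, zero_smul, add_zero, pow_zero]
    exact Finset.sum_congr rfl fun j _ => by
      have h : -((j+1 : ℕ):ℤ) + 1 = -(j:ℤ) := by push_cast; ring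
      rw [h]
  rw [mul_sub, mul_one, hrhs, h1, h2]

lemma Pop_mul_pow (T : X →L[ℂ] X) (b : ℤ → ℝ) (N : ℕ)
    (hpos : ∀ i : ℤ, 0 < i → b i = 0) (hbot : ∀ i : ℤ, i < -(N:ℤ) → b i = 0) (r : ℕ) :
    Pop T b N * (1 - T) ^ r
      = Pop T (fun i => (-1 : ℝ) ^ r * Dz^[r] b (i + r)) (N + r) := by
  induction r with
  | zero =>
    rw [pow_zero, mul_one]
    exact Pop_congr T N fun i _ => by simp
  | succ r ih =>
    have hpos' : ∀ i : ℤ, 0 < i → ((-1:ℝ) ^ r * Dz^[r] b (i + r)) = 0 := by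
      intro i hi
      rw [Dz_eq_zero r b (i + r) (fun i' h1 h2 => hpos i' (by omega)), mul_zero]
    have hbot' : ((-1:ℝ) ^ r * Dz^[r] b (-((N + r : ℕ):ℤ) - 1 + r)) = 0 := by
      have e : (-((N + r : ℕ):ℤ) - 1 + r) = -(N:ℤ) - 1 := by push_cast; ring
      rw [e, Dz_eq_zero r b _ (fun i' h1 h2 => hbot i' (by omega)), mul_zero]
    rw [pow_succ, ← mul_assoc, ih,
      Pop_mul_one_sub T _ (N + r) hpos' hbot']
    refine Pop_congr T (N + r + 1) (fun i _ => ?_)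
    have h1 : Dz^[r + 1] b (i + (r + 1 : ℕ)) = Dz^[r] b (i + r + 1) - Dz^[r] b (i + r) := by
      rw [Function.iterate_succ_apply']
      have e1 : i + ((r:ℕ) + 1 : ℕ) = i + r + 1 := by push_cast; ring
      show Dz^[r] b (i + ((r:ℕ)+1:ℕ)) - Dz^[r] b ((i + ((r:ℕ)+1:ℕ)) - 1) = _
      rw [e1]; norm_num
    have e3 : (i + 1 + (r:ℤ)) = i + r + 1 := by ring
    rw [h1, e3]
    ring

/-! ### The truncated coefficient sequence -/

noncomputable def bf (s : ℕ → ℝ) (n : ℕ) : ℤ → ℝ :=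
  fun i => if 0 ≤ (n:ℤ) + i ∧ i ≤ 0 then dSeq s ((n:ℤ) + i).toNat else 0

lemma Pop_bf (T : X →L[ℂ] X) (s : ℕ → ℝ) (n : ℕ) :
    Pop T (bf s n) n = ∑ k ∈ Finset.range (n + 1), ((dSeq s (n - k) : ℝ) : ℂ) • T ^ k := by
  refine Finset.sum_congr rfl fun j hj => ?_
  have hj' : j ≤ n := by simpa [Nat.lt_succ_iff] using hj
  have hcond : 0 ≤ (n:ℤ) + -(j:ℤ) ∧ -(j:ℤ) ≤ 0 := by omega
  have htn : ((n:ℤ) + -(j:ℤ)).toNat = n - j := by omega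
  rw [bf]
  simp only [if_pos hcond, htn]

lemma Sop_expand (T : X →L[ℂ] X) (s : ℕ → ℝ) (n r : ℕ) :
    (∑ k ∈ Finset.range (n + 1), ((dSeq s (n - k) : ℝ) : ℂ) • T ^ k) * (1 - T) ^ r
      = ∑ j ∈ Finset.range (n + r + 1),
          (((-1 : ℝ) ^ r * Dz^[r] (bf s n) (-(j:ℤ) + r) : ℝ) : ℂ) • T ^ j := by
  rw [← Pop_bf T s n,
    Pop_mul_pow T _ n (fun i hi => by rw [bf, if_neg (by omega)])
      (fun i hi => by rw [bf, if_neg (by omega)]) r]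
  rfl

lemma coef_big (s : ℕ → ℝ) (q r n j : ℕ) (hq : r + 1 = q) (hrj : r ≤ j) (hjn : j ≤ n + r) :
    |Dz^[r] (bf s n) (-(j:ℤ) + r)| = |dSeq^[q] s (n + r - j)| := by
  have h1 : Dz^[r] (bf s n) (-(j:ℤ) + r)
      = Dz^[r] (fun i' => zext (dSeq s) (i' + (n:ℤ))) (-(j:ℤ) + r) := by
    refine Dz_congr r _ _ _ (fun i' h1 h2 => ?_)
    by_cases hc : 0 ≤ (n:ℤ) + i'
    · rw [bf, if_pos ⟨hc, by omega⟩, zext, if_pos (by omega)]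
      congr 1
      omega
    · rw [bf, if_neg (by omega), zext, if_neg (by omega)]
  rw [h1, Dz_shift r _ (n:ℤ) _, ← zext_iter r (dSeq s)]
  have h2 : dSeq^[r] (dSeq s) = dSeq^[q] s := by
    rw [← hq, ← Function.iterate_succ_apply]
  rw [h2, zext, if_pos (by omega)]
  have e : ((-(j:ℤ) + (r:ℤ)) + (n:ℤ)).toNat = n + r - j := by omega
  rw [e]

lemma coef_small (s : ℕ → ℝ) (hsmono : Monotone s) (q r n j : ℕ) (hq : r + 1 = q)
    (hjr : j < r) (hnq : q ≤ n) :
    |Dz^[r] (bf s n) (-(j:ℤ) + r)| ≤ 2 ^ r * (s n - s (n - q)) := by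
  refine abs_Dz_le r _ _ _ (fun i' h1 h2 => ?_)
  have hC : 0 ≤ s n - s (n - q) := sub_nonneg.mpr (hsmono (Nat.sub_le n q))
  by_cases hc : 0 ≤ (n:ℤ) + i' ∧ i' ≤ 0
  · rw [bf, if_pos hc]
    obtain ⟨m', hm'⟩ : ∃ m', ((n:ℤ) + i').toNat = m' + 1 := ⟨((n:ℤ) + i').toNat - 1, by omega⟩
    rw [hm']
    have hd : dSeq s (m' + 1) = s (m' + 1) - s m' := rfl
    rw [hd, abs_of_nonneg (sub_nonneg.mpr (hsmono (Nat.le_succ m')))]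
    have l1 : s (m' + 1) ≤ s n := hsmono (by omega)
    have l2 : s (n - q) ≤ s m' := hsmono (by omega)
    linarith
  · rw [bf, if_neg hc, abs_zero]
    exact hC


lemma ratio_shift (s : ℕ → ℝ) (hs0 : ∀ n, 0 < s n)
    (hsrat : Tendsto (fun n => s (n + 1) / s n) atTop (nhds 1)) (c : ℕ) :
    Tendsto (fun n => s (n + c) / s n) atTop (nhds 1) := by
  induction c with
  | zero => exact tendsto_const_nhds.congr (fun n => (div_self (hs0 n).ne').symm)
  | succ c ih =>
    have h1 : Tendsto (fun n => s (n + c + 1) / s (n + c)) atTop (nhds 1) :=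
      hsrat.comp (tendsto_add_atTop_nat c)
    have h2 := h1.mul ih
    rw [one_mul] at h2
    refine h2.congr fun n => ?_
    have e1 : s (n + c) ≠ 0 := (hs0 _).ne'
    have e2 : s n ≠ 0 := (hs0 n).ne'
    field_simp
    ring

lemma frac_shift (s : ℕ → ℝ) (hs0 : ∀ n, 0 < s n)
    (hsrat : Tendsto (fun n => s (n + 1) / s n) atTop (nhds 1)) (c : ℕ) :
    Tendsto (fun n => s (n - c) / s n) atTop (nhds 1) := by
  have h := (ratio_shift s hs0 hsrat c).inv₀ one_ne_zero
  rw [inv_one] at h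
  have h2 : Tendsto (fun n => s n / s (n + c)) atTop (nhds 1) :=
    h.congr fun n => by rw [inv_div]
  have h3 := h2.comp (tendsto_sub_atTop_nat c)
  refine h3.congr' ?_
  filter_upwards [eventually_ge_atTop c] with n hn
  simp only [Function.comp]
  rw [Nat.sub_add_cancel hn]

lemma key_tendsto {X : Type*} [NormedAddCommGroup X] [NormedSpace ℂ X] (T : X →L[ℂ] X)
    (s : ℕ → ℝ) (q : ℕ) (hq : 2 ≤ q)
    (hs0 : ∀ n, 0 < s n) (hsmono : Monotone s)
    (hstop : Tendsto s atTop atTop)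
    (hsrat : Tendsto (fun n => s (n + 1) / s n) atTop (nhds 1))
    (hsq : Summable fun n => |dSeq^[q] s n|)
    (hTs : Tendsto (fun n => ‖T ^ n‖ / s n) atTop (nhds 0)) :
    Tendsto (fun n => ‖((((s n)⁻¹ : ℝ) : ℂ) •
        ∑ k ∈ Finset.range (n + 1), ((dSeq s (n - k) : ℝ) : ℂ) • T ^ k) * (1 - T) ^ (q - 1)‖)
      atTop (nhds 0) := by
  set r := q - 1 with hr
  have hrq : r + 1 = q := by omega
  set E := ∑' n, |dSeq^[q] s n| with hE
  have hE0 : 0 ≤ E := tsum_nonneg (fun n => abs_nonneg _)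
  set K := ∑ j ∈ Finset.range r, 2 ^ r * ‖T ^ j‖ with hK
  have hK0 : 0 ≤ K := Finset.sum_nonneg fun j _ => by positivity
  rw [Metric.tendsto_atTop]
  intro δ hδ
  set ε := δ / (2 * (E + 1)) with hε
  have hε0 : 0 < ε := by positivity
  obtain ⟨N₀, hN₀⟩ := Metric.tendsto_atTop.mp hTs ε hε0
  set C₀ := ∑ k ∈ Finset.range N₀, ‖T ^ k‖ with hC₀
  have hC₀0 : 0 ≤ C₀ := Finset.sum_nonneg fun k _ => norm_nonneg _
  have hTk : ∀ k, ‖T ^ k‖ ≤ ε * s k + C₀ := by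
    intro k
    by_cases hk : N₀ ≤ k
    · have h1 := hN₀ k hk
      rw [Real.dist_eq, sub_zero,
        abs_of_nonneg (div_nonneg (norm_nonneg _) (hs0 k).le)] at h1
      have h2 := (div_le_iff₀ (hs0 k)).mp h1.le
      nlinarith
    · have h1 : ‖T ^ k‖ ≤ C₀ :=
        Finset.single_le_sum (f := fun k => ‖T ^ k‖) (fun _ _ => norm_nonneg _)
          (Finset.mem_range.mpr (by omega))
      nlinarith [mul_nonneg hε0.le (hs0 k).le]
  -- the central bound
  have hbound : ∀ n, q ≤ n →
      ‖((((s n)⁻¹ : ℝ) : ℂ) •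
          ∑ k ∈ Finset.range (n + 1), ((dSeq s (n - k) : ℝ) : ℂ) • T ^ k) * (1 - T) ^ r‖
        ≤ (s n)⁻¹ * ((s n - s (n - q)) * K + (ε * s (n + r) + C₀) * E) := by
    intro n hn
    rw [smul_mul_assoc]
    have hnorm1 : ‖(((s n)⁻¹ : ℝ) : ℂ)‖ = (s n)⁻¹ := by
      rw [Complex.norm_real, Real.norm_eq_abs, abs_of_nonneg (inv_nonneg.mpr (hs0 n).le)]
    refine le_trans (ContinuousLinearMap.opNorm_smul_le _ _) ?_
    rw [hnorm1]
    refine mul_le_mul_of_nonneg_left ?_ (inv_nonneg.mpr (hs0 n).le)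
    rw [Sop_expand T s n r]
    refine le_trans (norm_sum_le _ _) ?_
    have hterm : ∀ j : ℕ,
        ‖(((-1 : ℝ) ^ r * Dz^[r] (bf s n) (-(j:ℤ) + r) : ℝ) : ℂ) • T ^ j‖
          = |Dz^[r] (bf s n) (-(j:ℤ) + r)| * ‖T ^ j‖ := by
      intro j
      have h0 : ‖(((-1 : ℝ) ^ r * Dz^[r] (bf s n) (-(j:ℤ) + r) : ℝ) : ℂ) • T ^ j‖
          = ‖(((-1 : ℝ) ^ r * Dz^[r] (bf s n) (-(j:ℤ) + r) : ℝ) : ℂ)‖ * ‖T ^ j‖ :=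
        norm_smul (α := ℂ) (β := X →L[ℂ] X) _ _
      rw [h0, Complex.norm_real, Real.norm_eq_abs, abs_mul, abs_pow, abs_neg, abs_one,
        one_pow, one_mul]
    rw [Finset.sum_congr rfl (fun j _ => hterm j)]
    have hsplit : ∑ j ∈ Finset.range (n + r + 1), |Dz^[r] (bf s n) (-(j:ℤ) + r)| * ‖T ^ j‖
        = (∑ j ∈ Finset.range r, |Dz^[r] (bf s n) (-(j:ℤ) + r)| * ‖T ^ j‖)
          + ∑ j ∈ Finset.Ico r (n + r + 1), |Dz^[r] (bf s n) (-(j:ℤ) + r)| * ‖T ^ j‖ := by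
      rw [Finset.range_eq_Ico,
        ← Finset.sum_Ico_consecutive _ (Nat.zero_le r) (by omega : r ≤ n + r + 1),
        ← Finset.range_eq_Ico]
    rw [hsplit]
    have hA0 : 0 ≤ ε * s (n + r) + C₀ :=
      add_nonneg (mul_nonneg hε0.le (hs0 (n + r)).le) hC₀0
    have hpart1 : (∑ j ∈ Finset.range r, |Dz^[r] (bf s n) (-(j:ℤ) + r)| * ‖T ^ j‖)
        ≤ (s n - s (n - q)) * K := by
      rw [hK, Finset.mul_sum]
      refine Finset.sum_le_sum fun j hj => ?_
      have hjr : j < r := Finset.mem_range.mp hj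
      have h1 := coef_small s hsmono q r n j hrq hjr hn
      calc |Dz^[r] (bf s n) (-(j:ℤ) + r)| * ‖T ^ j‖
          ≤ (2 ^ r * (s n - s (n - q))) * ‖T ^ j‖ :=
            mul_le_mul_of_nonneg_right h1 (norm_nonneg _)
        _ = (s n - s (n - q)) * (2 ^ r * ‖T ^ j‖) := by ring
    have hpart2 : (∑ j ∈ Finset.Ico r (n + r + 1), |Dz^[r] (bf s n) (-(j:ℤ) + r)| * ‖T ^ j‖)
        ≤ (ε * s (n + r) + C₀) * E := by
      have hb1 : ∀ j ∈ Finset.Ico r (n + r + 1),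
          |Dz^[r] (bf s n) (-(j:ℤ) + r)| * ‖T ^ j‖
            ≤ |dSeq^[q] s (n + r - j)| * (ε * s (n + r) + C₀) := by
        intro j hj
        obtain ⟨hj1, hj2⟩ := Finset.mem_Ico.mp hj
        rw [coef_big s q r n j hrq hj1 (by omega)]
        refine mul_le_mul_of_nonneg_left ?_ (abs_nonneg _)
        refine le_trans (hTk j) ?_
        have := hsmono (show j ≤ n + r by omega)
        nlinarith
      have hsum2 : ∑ j ∈ Finset.Ico r (n + r + 1), |dSeq^[q] s (n + r - j)| ≤ E := by
        have hre : ∑ j ∈ Finset.Ico r (n + r + 1), |dSeq^[q] s (n + r - j)|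
            = ∑ j ∈ Finset.range (n + 1), |dSeq^[q] s (n - j)| := by
          rw [Finset.sum_Ico_eq_sum_range]
          refine Finset.sum_congr (by rw [show n + r + 1 - r = n + 1 by omega]) fun j hj => ?_
          have e : n + r - (r + j) = n - j := by omega
          rw [e]
        have hre2 : ∑ j ∈ Finset.range (n + 1), |dSeq^[q] s (n - j)|
            = ∑ j ∈ Finset.range (n + 1), |dSeq^[q] s j| := by
          have h := Finset.sum_range_reflect (fun m => |dSeq^[q] s m|) (n + 1)
          simp only [Nat.add_sub_cancel] at h
          exact h
        rw [hre, hre2]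
        exact Summable.sum_le_tsum (Finset.range (n + 1)) (fun _ _ => abs_nonneg _) hsq
      calc ∑ j ∈ Finset.Ico r (n + r + 1), |Dz^[r] (bf s n) (-(j:ℤ) + r)| * ‖T ^ j‖
          ≤ ∑ j ∈ Finset.Ico r (n + r + 1), |dSeq^[q] s (n + r - j)| * (ε * s (n + r) + C₀) :=
            Finset.sum_le_sum hb1
        _ = (∑ j ∈ Finset.Ico r (n + r + 1), |dSeq^[q] s (n + r - j)|) * (ε * s (n + r) + C₀) :=
            (Finset.sum_mul _ _ _).symm
        _ ≤ E * (ε * s (n + r) + C₀) := mul_le_mul_of_nonneg_right hsum2 hA0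
        _ = (ε * s (n + r) + C₀) * E := mul_comm _ _
    linarith
  -- the limit computation
  set g : ℕ → ℝ := fun n =>
    K * ((s n - s (n - q)) / s n) + (ε * E) * (s (n + r) / s n) + (E * C₀) * (s n)⁻¹ with hg
  have hgeq : ∀ n, (s n)⁻¹ * ((s n - s (n - q)) * K + (ε * s (n + r) + C₀) * E) = g n := by
    intro n
    rw [hg]
    field_simp
    ring
  have l1 : Tendsto (fun n => (s n - s (n - q)) / s n) atTop (nhds 0) := by
    have h1 := frac_shift s hs0 hsrat q
    have h2 := (tendsto_const_nhds : Tendsto (fun _ : ℕ => (1:ℝ)) atTop (nhds 1)).sub h1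
    rw [sub_self] at h2
    refine h2.congr fun n => ?_
    rw [sub_div, div_self (hs0 n).ne']
  have l2 := ratio_shift s hs0 hsrat r
  have l3 : Tendsto (fun n => (s n)⁻¹) atTop (nhds 0) := hstop.inv_tendsto_atTop
  have hgl : Tendsto g atTop (nhds (ε * E)) := by
    have h := ((l1.const_mul K).add (l2.const_mul (ε * E))).add (l3.const_mul (E * C₀))
    simpa using h
  have hεE : ε * E < δ := by
    rw [hε, div_mul_eq_mul_div, div_lt_iff₀ (by positivity)]
    nlinarith
  have hev := hgl.eventually_lt_const hεE
  obtain ⟨N1, hN1⟩ := eventually_atTop.mp (hev.and (eventually_ge_atTop q))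
  refine ⟨N1, fun n hn => ?_⟩
  obtain ⟨h1, h2⟩ := hN1 n hn
  rw [Real.dist_eq, sub_zero, abs_of_nonneg (norm_nonneg _)]
  calc ‖_‖ ≤ (s n)⁻¹ * ((s n - s (n - q)) * K + (ε * s (n + r) + C₀) * E) := hbound n h2
    _ = g n := hgeq n
    _ < δ := h1

end Stmt18Aux

set_option maxHeartbeats 1000000 in
theorem stmt18 {X : Type*} [NormedAddCommGroup X] [NormedSpace ℂ X] [CompleteSpace X]
    [Nontrivial X] (T : X →L[ℂ] X) (b s : ℕ → ℝ) (q : ℕ)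
    (hb0 : ∀ n, 0 < b n) (hbH : Hindex b ≠ ⊤)
    (hbtop : Filter.Tendsto b Filter.atTop Filter.atTop)
    (hTb : Filter.Tendsto (fun n => ‖T ^ n‖ / b n) Filter.atTop (nhds 0))
    (hs0 : ∀ n, 0 < s n) (hsmono : Monotone s)
    (hstop : Filter.Tendsto s Filter.atTop Filter.atTop)
    (hsrat : Filter.Tendsto (fun n => s (n + 1) / s n) Filter.atTop (nhds 1))
    (hq : 2 ≤ q) (hsq : Summable fun n => |dSeq^[q] s n|)
    (hbs : ∃ M : ℝ, ∀ n, |b n / s n| ≤ M) :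
    Filter.Tendsto (fun n => ‖T ^ n‖ / s n) Filter.atTop (nhds 0) ∧
    ((∃ P : X →L[ℂ] X,
        Filter.Tendsto
          (fun n : ℕ => (((s n)⁻¹ : ℝ) : ℂ) •
            ∑ k ∈ Finset.range (n + 1), ((dSeq s (n - k) : ℝ) : ℂ) • T ^ k)
          Filter.atTop (nhds P)) ↔
      (IsClosed (LinearMap.range ((1 - T : X →L[ℂ] X) : X →ₗ[ℂ] X) : Set X) ∧
        IsCompl (LinearMap.ker ((1 - T : X →L[ℂ] X) : X →ₗ[ℂ] X)) (LinearMap.range ((1 - T : X →L[ℂ] X) : X →ₗ[ℂ] X)))) ∧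
    ∀ P : X →L[ℂ] X,
      Filter.Tendsto
          (fun n : ℕ => (((s n)⁻¹ : ℝ) : ℂ) •
            ∑ k ∈ Finset.range (n + 1), ((dSeq s (n - k) : ℝ) : ℂ) • T ^ k)
          Filter.atTop (nhds P) →
        (P * P = P ∧ LinearMap.range (P : X →ₗ[ℂ] X) = LinearMap.ker ((1 - T : X →L[ℂ] X) : X →ₗ[ℂ] X) ∧
          LinearMap.ker (P : X →ₗ[ℂ] X) = LinearMap.range ((1 - T : X →L[ℂ] X) : X →ₗ[ℂ] X)) := by
  classical
  obtain ⟨Mb, hMb⟩ := hbs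
  -- Part 1 : ‖T^n‖/s n → 0
  have hTs : Filter.Tendsto (fun n => ‖T ^ n‖ / s n) Filter.atTop (nhds 0) := by
    have hle : ∀ n, ‖T ^ n‖ / s n ≤ (‖T ^ n‖ / b n) * Mb := by
      intro n
      have he : ‖T ^ n‖ / s n = (‖T ^ n‖ / b n) * (b n / s n) := by
        rw [div_mul_div_comm, mul_comm (b n) (s n), mul_div_mul_right _ _ (hb0 n).ne']
      rw [he]
      exact mul_le_mul_of_nonneg_left (le_of_abs_le (hMb n))
        (div_nonneg (norm_nonneg _) (hb0 n).le)
    have h2 : Filter.Tendsto (fun n => (‖T ^ n‖ / b n) * Mb) Filter.atTop (nhds 0) := by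
      simpa using hTb.mul_const Mb
    exact squeeze_zero (fun n => div_nonneg (norm_nonneg _) (hs0 n).le) hle h2
  set A : ℕ → (X →L[ℂ] X) := fun n : ℕ => (((s n)⁻¹ : ℝ) : ℂ) •
      ∑ k ∈ Finset.range (n + 1), ((dSeq s (n - k) : ℝ) : ℂ) • T ^ k with hA
  -- basic sum identities
  have hsum_d0 : ∀ n, ∑ j ∈ Finset.range (n + 1), dSeq s j = s n := by
    intro n
    induction n with
    | zero => simp [dSeq]
    | succ n ih =>
      rw [Finset.sum_range_succ, ih]
      show s n + (s (n + 1) - s n) = s (n + 1)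
      ring
  have hsum_d : ∀ n, ∑ k ∈ Finset.range (n + 1), dSeq s (n - k) = s n := by
    intro n
    have h := Finset.sum_range_reflect (fun j => dSeq s j) (n + 1)
    simp only [Nat.add_sub_cancel] at h
    rw [h, hsum_d0]
  have hcast : ∀ n, (∑ k ∈ Finset.range (n + 1), ((dSeq s (n - k) : ℝ) : ℂ))
      = ((s n : ℝ) : ℂ) := by
    intro n
    rw [← Complex.ofReal_sum]
    exact congrArg _ (hsum_d n)
  have hpowfix : ∀ (k : ℕ) (x : X), T x = x → (T ^ k) x = x := by
    intro k x hx
    induction k with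
    | zero => simp
    | succ k ih => rw [pow_succ, ContinuousLinearMap.mul_apply, hx, ih]
  have hAfix : ∀ n (x : X), T x = x → A n x = x := by
    intro n x hx
    rw [hA]
    simp only [ContinuousLinearMap.smul_apply, ContinuousLinearMap.coe_sum',
      Finset.sum_apply]
    rw [show (∑ k ∈ Finset.range (n + 1), ((dSeq s (n - k) : ℝ) : ℂ) • (T ^ k) x)
        = ∑ k ∈ Finset.range (n + 1), ((dSeq s (n - k) : ℝ) : ℂ) • x from
      Finset.sum_congr rfl fun k _ => by rw [hpowfix k x hx]]
    rw [← Finset.sum_smul, hcast n, smul_smul,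
      ← Complex.ofReal_mul, inv_mul_cancel₀ (hs0 n).ne', Complex.ofReal_one, one_smul]
  have hmemker : ∀ x : X, x ∈ LinearMap.ker ((1 - T : X →L[ℂ] X) : X →ₗ[ℂ] X) ↔ T x = x := by
    intro x
    rw [LinearMap.mem_ker]
    constructor
    · intro h
      have e : (1 - T) x = x - T x := by
        simp [ContinuousLinearMap.sub_apply]
      rw [ContinuousLinearMap.coe_coe, e] at h
      exact (sub_eq_zero.mp h).symm
    · intro h
      simp [ContinuousLinearMap.sub_apply, h]
  -- Part 3 : properties of any limit P
  have part3 : ∀ P : X →L[ℂ] X, Filter.Tendsto A Filter.atTop (nhds P) →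
      P * P = P ∧ LinearMap.range (P : X →ₗ[ℂ] X) = LinearMap.ker ((1 - T : X →L[ℂ] X) : X →ₗ[ℂ] X) ∧
        LinearMap.ker (P : X →ₗ[ℂ] X) = LinearMap.range ((1 - T : X →L[ℂ] X) : X →ₗ[ℂ] X) := by
    intro P hP
    have hA1 : Filter.Tendsto (fun n => A (n + 1)) Filter.atTop (nhds P) :=
      hP.comp (tendsto_add_atTop_nat 1)
    have hdiv0 : Filter.Tendsto (fun n => dSeq s (n + 1) / s n) Filter.atTop (nhds 0) := by
      have h1 := hsrat.sub_const 1
      rw [sub_self] at h1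
      refine h1.congr fun n => ?_
      show s (n + 1) / s n - 1 = (s (n + 1) - s n) / s n
      rw [sub_div, div_self (hs0 n).ne']
    have hTA : ∀ n, T * A n
        = ((s (n + 1) / s n : ℝ) : ℂ) • A (n + 1) - ((dSeq s (n + 1) / s n : ℝ) : ℂ) • 1 := by
      intro n
      have hTS : T * (∑ k ∈ Finset.range (n + 1), ((dSeq s (n - k) : ℝ) : ℂ) • T ^ k)
          = (∑ k ∈ Finset.range (n + 2), ((dSeq s (n + 1 - k) : ℝ) : ℂ) • T ^ k)
            - ((dSeq s (n + 1) : ℝ) : ℂ) • 1 := by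
      -- RHS
        rw [Finset.sum_range_succ' (fun k => ((dSeq s (n + 1 - k) : ℝ) : ℂ) • T ^ k) (n + 1)]
        simp only [Nat.succ_sub_succ_eq_sub, Nat.sub_zero, pow_zero]
        rw [add_sub_cancel_right, Finset.mul_sum]
        exact Finset.sum_congr rfl fun k _ => by rw [mul_smul_comm, ← pow_succ']
      rw [hA]
      simp only []
      rw [mul_smul_comm, hTS, smul_sub, smul_smul, smul_smul]
      congr 1
      · congr 1
        rw [← Complex.ofReal_mul]
        norm_cast
        field_simp
        rw [mul_comm (s n) (s (n + 1)), ← div_div, div_self (hs0 (n + 1)).ne']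
      · rw [← Complex.ofReal_mul]
        norm_cast
        rw [div_eq_inv_mul]
    have hc1 : Filter.Tendsto (fun n => ((s (n + 1) / s n : ℝ) : ℂ)) Filter.atTop (nhds 1) := by
      have h := (Complex.continuous_ofReal.tendsto 1).comp hsrat
      rw [Complex.ofReal_one] at h
      exact h
    have hc2 : Filter.Tendsto (fun n => ((dSeq s (n + 1) / s n : ℝ) : ℂ)) Filter.atTop (nhds 0) := by
      have h := (Complex.continuous_ofReal.tendsto 0).comp hdiv0
      rw [Complex.ofReal_zero] at h
      exact h
    have hTAlim : Filter.Tendsto (fun n => T * A n) Filter.atTop (nhds P) := by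
      have h := (hc1.smul hA1).sub (hc2.smul_const (1 : X →L[ℂ] X))
      rw [one_smul, zero_smul, sub_zero] at h
      exact h.congr fun n => (hTA n).symm
    have hTP : T * P = P :=
      tendsto_nhds_unique (hP.const_mul T) hTAlim
    have hAT : ∀ n, A n * T = T * A n := by
      intro n
      rw [hA]
      simp only []
      rw [smul_mul_assoc, mul_smul_comm]
      congr 1
      rw [Finset.sum_mul, Finset.mul_sum]
      exact Finset.sum_congr rfl fun k _ => by
        rw [smul_mul_assoc, mul_smul_comm, ← pow_succ, ← pow_succ']
    have hPT : P * T = P := by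
      refine tendsto_nhds_unique (hP.mul_const T) ?_
      exact hTAlim.congr fun n => (hAT n).symm
    have hfix : ∀ x : X, T x = x → P x = x := by
      intro x hx
      have h1 : Filter.Tendsto (fun n => A n x) Filter.atTop (nhds (P x)) :=
        ((ContinuousLinearMap.apply ℂ X x).continuous.tendsto P).comp hP
      have h2 : (fun n => A n x) = fun _ => x := funext fun n => hAfix n x hx
      rw [h2] at h1
      exact (tendsto_nhds_unique tendsto_const_nhds h1).symm
    have hrange : LinearMap.range (P : X →ₗ[ℂ] X) = LinearMap.ker ((1 - T : X →L[ℂ] X) : X →ₗ[ℂ] X) := by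
      apply le_antisymm
      · rintro y ⟨x, rfl⟩
        rw [LinearMap.mem_ker]
        have h : (1 - T) (P x) = ((1 - T) * P) x := rfl
        rw [ContinuousLinearMap.coe_coe, ContinuousLinearMap.coe_coe, h, sub_mul, one_mul, hTP, sub_self]
        rfl
      · intro x hx
        exact ⟨x, hfix x ((hmemker x).mp hx)⟩
    have hPP : P * P = P := by
      ext x
      have h1 : P x ∈ LinearMap.ker ((1 - T : X →L[ℂ] X) : X →ₗ[ℂ] X) := hrange ▸ LinearMap.mem_range_self (P : X →ₗ[ℂ] X) x
      exact hfix _ ((hmemker _).mp h1)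
    have hPTk : ∀ k : ℕ, P * T ^ k = P := by
      intro k
      induction k with
      | zero => simp
      | succ k ih => rw [pow_succ, ← mul_assoc, ih, hPT]
    have hPA : ∀ n, P * A n = P := by
      intro n
      rw [hA]
      simp only []
      rw [mul_smul_comm, Finset.mul_sum]
      have h1 : ∀ k ∈ Finset.range (n + 1),
          P * (((dSeq s (n - k) : ℝ) : ℂ) • T ^ k) = ((dSeq s (n - k) : ℝ) : ℂ) • P := by
        intro k _
        rw [mul_smul_comm, hPTk]
      rw [Finset.sum_congr rfl h1, ← Finset.sum_smul, hcast n, smul_smul,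
        ← Complex.ofReal_mul, inv_mul_cancel₀ (hs0 n).ne', Complex.ofReal_one, one_smul]
    have hker : LinearMap.ker (P : X →ₗ[ℂ] X) = LinearMap.range ((1 - T : X →L[ℂ] X) : X →ₗ[ℂ] X) := by
      apply le_antisymm
      · intro x hx
        have hPx : P x = 0 := LinearMap.mem_ker.mp hx
        have hnorm0 : Filter.Tendsto (fun n => ‖A n - P‖) Filter.atTop (nhds 0) :=
          tendsto_iff_norm_sub_tendsto_zero.mp hP
        obtain ⟨n₀, hn₀⟩ := (hnorm0.eventually_lt_const (by norm_num : (0:ℝ) < 1/2)).exists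
        set B := A n₀ with hB
        set R₀ : X →L[ℂ] X := (((s n₀)⁻¹ : ℝ) : ℂ) •
          ∑ k ∈ Finset.range (n₀ + 1), ((dSeq s (n₀ - k) : ℝ) : ℂ) •
            (∑ i ∈ Finset.range k, T ^ i) with hR₀
        have hgeom : ∀ k : ℕ, (1 - T) * (∑ i ∈ Finset.range k, T ^ i) = 1 - T ^ k := by
          intro k
          induction k with
          | zero => simp
          | succ k ih =>
            rw [Finset.sum_range_succ, mul_add, ih, sub_mul, one_mul, ← pow_succ']
            abel
        have hkey0 : (1 - T) * R₀ = 1 - B := by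
          rw [hR₀, hB, hA]
          simp only []
          rw [mul_smul_comm, Finset.mul_sum]
          have h1 : ∀ k ∈ Finset.range (n₀ + 1),
              (1 - T) * (((dSeq s (n₀ - k) : ℝ) : ℂ) • (∑ i ∈ Finset.range k, T ^ i))
                = ((dSeq s (n₀ - k) : ℝ) : ℂ) • (1 : X →L[ℂ] X)
                  - ((dSeq s (n₀ - k) : ℝ) : ℂ) • T ^ k := by
            intro k _
            rw [mul_smul_comm, hgeom, smul_sub]
          rw [Finset.sum_congr rfl h1, Finset.sum_sub_distrib, ← Finset.sum_smul, hcast n₀,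
            smul_sub, smul_smul, ← Complex.ofReal_mul, inv_mul_cancel₀ (hs0 n₀).ne',
            Complex.ofReal_one, one_smul]
        have hPB : ∀ m : ℕ, P * B ^ m = P := by
          intro m
          induction m with
          | zero => simp
          | succ m ih => rw [pow_succ, ← mul_assoc, ih, hB, hPA]
        set xm : ℕ → X := fun m => (B ^ m) x with hxm
        have hxm0 : xm 0 = x := by simp [hxm]
        have hPxm : ∀ m, P (xm m) = 0 := by
          intro m
          have h : P (xm m) = (P * B ^ m) x := rfl
          rw [h, hPB, hPx]
        have hxsucc : ∀ m, xm (m + 1) = B (xm m) := by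
          intro m
          rw [hxm]
          simp only []
          rw [pow_succ']
          rfl
        have hnormxm : ∀ m, ‖xm m‖ ≤ (1/2) ^ m * ‖x‖ := by
          intro m
          induction m with
          | zero => simp [hxm0]
          | succ m ih =>
            rw [hxsucc]
            have e1 : B (xm m) = (B - P) (xm m) := by
              rw [ContinuousLinearMap.sub_apply, hPxm, sub_zero]
            rw [e1]
            calc ‖(B - P) (xm m)‖ ≤ ‖B - P‖ * ‖xm m‖ := ContinuousLinearMap.le_opNorm _ _
              _ ≤ (1/2) * ((1/2) ^ m * ‖x‖) :=
                mul_le_mul hn₀.le ih (norm_nonneg _) (by norm_num)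
              _ = (1/2) ^ (m + 1) * ‖x‖ := by ring
        have hsumm : Summable xm := by
          refine Summable.of_norm_bounded ?_ hnormxm
          exact (summable_geometric_of_lt_one (by norm_num) (by norm_num)).mul_right _
        set w := ∑' m, xm m with hw
        have hBw : B w = ∑' m, xm (m + 1) := by
          rw [hw, ContinuousLinearMap.map_tsum B hsumm]
          exact tsum_congr fun m => (hxsucc m).symm
        have hw2 : w = x + ∑' m, xm (m + 1) := by
          rw [hw, Summable.tsum_eq_zero_add hsumm, hxm0]
        have hfinal : (1 - T) (R₀ w) = x := by
          have h : (1 - T) (R₀ w) = ((1 - T) * R₀) w := rfl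
          rw [h, hkey0]
          have h2 : (1 - B) w = w - B w := by
            simp [ContinuousLinearMap.sub_apply]
          rw [h2, hBw, hw2, add_sub_cancel_right]
        exact LinearMap.mem_range.mpr ⟨R₀ w, hfinal⟩
      · rintro x ⟨y, rfl⟩
        rw [LinearMap.mem_ker]
        have h : P ((1 - T) y) = (P * (1 - T)) y := rfl
        rw [ContinuousLinearMap.coe_coe, ContinuousLinearMap.coe_coe, h, mul_sub, mul_one, hPT, sub_self]
        rfl
    exact ⟨hPP, hrange, hker⟩
  -- backward direction
  have hkey := Stmt18Aux.key_tendsto T s q hq hs0 hsmono hstop hsrat hsq hTs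
  have backward : IsClosed (LinearMap.range ((1 - T : X →L[ℂ] X) : X →ₗ[ℂ] X) : Set X) →
      IsCompl (LinearMap.ker ((1 - T : X →L[ℂ] X) : X →ₗ[ℂ] X)) (LinearMap.range ((1 - T : X →L[ℂ] X) : X →ₗ[ℂ] X)) →
      ∃ P : X →L[ℂ] X, Filter.Tendsto A Filter.atTop (nhds P) := by
    intro hcl hcompl
    set Kr := LinearMap.ker ((1 - T : X →L[ℂ] X) : X →ₗ[ℂ] X) with hKr
    set Y := LinearMap.range ((1 - T : X →L[ℂ] X) : X →ₗ[ℂ] X) with hY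
    have hKc : IsClosed (Kr : Set X) := ContinuousLinearMap.isClosed_ker (1 - T)
    haveI : CompleteSpace Y := hcl.completeSpace_coe
    set prj := Kr.linearProjOfClosedCompl Y hcompl hKc hcl with hprj
    set P₀ : X →L[ℂ] X := Kr.subtypeL.comp prj with hP₀
    have f0 : ∀ x : X, P₀ x = ((Kr.linearProjOfIsCompl Y hcompl) x : X) := by
      intro x
      rw [hP₀]
      simp [hprj, Submodule.coe_continuous_linearProjOfClosedCompl']
      rfl
    have f1 : ∀ x : X, x ∈ Kr → P₀ x = x := by
      intro x hx
      rw [f0]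
      exact congrArg Subtype.val (Submodule.linearProjOfIsCompl_apply_left hcompl ⟨x, hx⟩)
    have f2 : ∀ x : X, x - P₀ x ∈ Y := by
      intro x
      have h := Submodule.projection_add_projection_eq_self hcompl x
      have h2 : x - P₀ x = ((Y.linearProjOfIsCompl Kr hcompl.symm) x : X) := by
        rw [f0]
        exact sub_eq_of_eq_add' h.symm
      rw [h2]
      exact Submodule.coe_mem _
    have fmem : ∀ x : X, P₀ x ∈ Kr := by
      intro x
      rw [f0]
      exact Submodule.coe_mem _
    set e : Y →L[ℂ] Y := ContinuousLinearMap.codRestrict ((1 - T).comp Y.subtypeL) Y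
      (fun y => LinearMap.mem_range.mpr ⟨(y : X), rfl⟩) with he
    have he_apply : ∀ y : Y, (e y : X) = (1 - T) (y : X) := fun y => rfl
    have hek : LinearMap.ker (e : Y →ₗ[ℂ] Y) = ⊥ := by
      apply (Submodule.eq_bot_iff _).mpr
      intro y hy
      have h0 : e y = 0 := LinearMap.mem_ker.mp hy
      have h1 : (1 - T) (y : X) = 0 := by
        rw [← he_apply, h0]
        rfl
      have h2 : (y : X) ∈ Kr := LinearMap.mem_ker.mpr h1
      have h3 : (y : X) = 0 := Submodule.disjoint_def.mp hcompl.disjoint _ h2 y.2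
      exact Subtype.ext h3
    have hes : LinearMap.range (e : Y →ₗ[ℂ] Y) = ⊤ := by
      rw [LinearMap.range_eq_top, ContinuousLinearMap.coe_coe]
      intro z
      obtain ⟨x, hx⟩ := LinearMap.mem_range.mp z.2
      refine ⟨⟨x - P₀ x, f2 x⟩, ?_⟩
      apply Subtype.ext
      rw [he_apply]
      show (1 - T) (x - P₀ x) = (z : X)
      rw [map_sub, show (1 - T) (P₀ x) = 0 from LinearMap.mem_ker.mp (fmem x), sub_zero,
        show (1 - T) x = (z : X) from hx]
    set eqv := ContinuousLinearEquiv.ofBijective e hek hes with heqv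
    set g : Y →L[ℂ] Y := (eqv.symm : Y →L[ℂ] Y) with hg
    have hge : ∀ v : Y, e (g v) = v := by
      intro v
      have h1 : (e : Y → Y) = eqv := by
        rw [heqv, ContinuousLinearEquiv.coeFn_ofBijective]
      have h2 : (g : Y → Y) = eqv.symm := rfl
      rw [show g v = eqv.symm v from rfl, show e (eqv.symm v) = eqv (eqv.symm v) from
        congrFun h1 _]
      exact eqv.apply_symm_apply v
    have hkeyj : ∀ (j : ℕ) (w : Y), ((1 - T) ^ j) (((g ^ j) w : Y) : X) = (w : X) := by
      intro j
      induction j with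
      | zero => intro w; simp
      | succ j ih =>
        intro w
        have h1 : ((g ^ (j + 1)) w : Y) = g ((g ^ j) w) := by
          rw [pow_succ']
          rfl
        have h3 : ((1 - T) ^ (j + 1)) ((g ((g ^ j) w) : Y) : X)
            = ((1 - T) ^ j) ((1 - T) ((g ((g ^ j) w) : Y) : X)) := by
          rw [pow_succ]
          rfl
        have h4 : (1 - T) ((g ((g ^ j) w) : Y) : X) = (e (g ((g ^ j) w)) : X) :=
          (he_apply _).symm
        rw [h1, h3, h4, hge]
        exact ih w
    set G : X →L[ℂ] X := Y.subtypeL.comp ((g ^ (q - 1)).comp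
      (ContinuousLinearMap.codRestrict (1 - P₀) Y
        (fun x => by
          have h := f2 x
          have e1 : (1 - P₀) x = x - P₀ x := by
            simp [ContinuousLinearMap.sub_apply]
          rw [e1]
          exact h))) with hG
    have hGap : ∀ x : X, ((1 - T) ^ (q - 1)) (G x) = x - P₀ x := by
      intro x
      rw [hG]
      have h1 : G x = (((g ^ (q - 1))
          (⟨(1 - P₀) x, _⟩ : Y) : Y) : X) := rfl
      rw [ContinuousLinearMap.comp_apply, ContinuousLinearMap.comp_apply]
      rw [show (Y.subtypeL) ((g ^ (q - 1)) ((ContinuousLinearMap.codRestrict (1 - P₀) Y _) x))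
          = (((g ^ (q - 1)) ((ContinuousLinearMap.codRestrict (1 - P₀) Y _) x) : Y) : X) from rfl]
      rw [hkeyj (q - 1)]
      show (1 - P₀) x = x - P₀ x
      simp [ContinuousLinearMap.sub_apply]
    have hAP : ∀ n, A n - P₀ = (A n * (1 - T) ^ (q - 1)) * G := by
      intro n
      ext x
      have h1 : ((A n * (1 - T) ^ (q - 1)) * G) x = (A n) (((1 - T) ^ (q - 1)) (G x)) := rfl
      rw [h1, hGap, map_sub]
      have h2 : (A n) (P₀ x) = P₀ x := hAfix n _ ((hmemker _).mp (fmem x))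
      rw [h2]
      rfl
    refine ⟨P₀, ?_⟩
    rw [tendsto_iff_norm_sub_tendsto_zero]
    have hb2 : ∀ n, ‖A n - P₀‖ ≤ ‖A n * (1 - T) ^ (q - 1)‖ * ‖G‖ := by
      intro n
      rw [hAP n]
      exact norm_mul_le _ _
    have h3 : Filter.Tendsto (fun n => ‖A n * (1 - T) ^ (q - 1)‖ * ‖G‖) Filter.atTop (nhds 0) := by
      have h4 := hkey.mul_const ‖G‖
      rw [zero_mul] at h4
      exact h4
    exact squeeze_zero (fun n => norm_nonneg _) hb2 h3
  -- assembly
  refine ⟨hTs, ⟨?_, ?_⟩, part3⟩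
  · rintro ⟨P, hP⟩
    obtain ⟨hPP, hr, hk⟩ := part3 P hP
    constructor
    · rw [← hk]
      exact ContinuousLinearMap.isClosed_ker P
    · rw [← hr, ← hk]
      constructor
      · rw [Submodule.disjoint_def]
        intro x hx hxk
        obtain ⟨y, rfl⟩ := LinearMap.mem_range.mp hx
        have h1 : P (P y) = P y := by
          have : P (P y) = (P * P) y := rfl
          rw [this, hPP]
        have h0 : P (P y) = 0 := LinearMap.mem_ker.mp hxk
        rw [h1] at h0
        exact h0
      · rw [codisjoint_iff, eq_top_iff]
        intro x _
        refine Submodule.mem_sup.mpr ⟨P x, LinearMap.mem_range_self (P : X →ₗ[ℂ] X) x, x - P x, ?_, by abel⟩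
        rw [LinearMap.mem_ker, map_sub]
        have h1 : P (P x) = P x := by
          have : P (P x) = (P * P) x := rfl
          rw [this, hPP]
        rw [ContinuousLinearMap.coe_coe, h1, sub_self]
  · rintro ⟨hcl, hcompl⟩
    exact backward hcl hcompl
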